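/- Let P be any probability distribution on j-subsets of [n], fix a j-subset v, and let P° be the concentric distribution centered at v with the same ring weights as P. If C° is a k-subset maximizing π_{P°}, then there exists a k-subset Ĉ with π_P(Ĉ) ≥ π_{P°}(C°). That is, the maximum approval proportion under P is at least the maximum approval proportion under P°. -/

import Mathlib

open Finset

private lemma subtypeCongr_apply_pos {α : Type*} {p q : α → Prop} [DecidablePred p] [DecidablePred q]
    (e : { x // p x } ≃ { x // q x }) (f : { x // ¬p x } ≃ { x // ¬q x }) (x : α) (h : p x) :
    Equiv.subtypeCongr e f x = (e ⟨x, h⟩ : { x // q x }).1 := by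
  simp [Equiv.subtypeCongr, h]

private lemma subtypeCongr_apply_neg {α : Type*} {p q : α → Prop} [DecidablePred p] [DecidablePred q]
    (e : { x // p x } ≃ { x // q x }) (f : { x // ¬p x } ≃ { x // ¬q x }) (x : α) (h : ¬ p x) :
    Equiv.subtypeCongr e f x = (f ⟨x, h⟩ : { x // ¬ q x }).1 := by
  simp [Equiv.subtypeCongr, h]

private lemma exists_good_perm {α : Type*} [Fintype α] [DecidableEq α]
    (v s t : Finset α) (hst : s.card = t.card) (hint : (v ∩ s).card = (v ∩ t).card) :
    ∃ σ : Equiv.Perm α, (∀ x, x ∈ v ↔ σ x ∈ v) ∧ (∀ x, x ∈ s ↔ σ x ∈ t) := by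
  have hsd : (v \ s).card = (v \ t).card := by
    have h1 := card_inter_add_card_sdiff v s
    have h2 := card_inter_add_card_sdiff v t
    omega
  have hsv : (s \ v).card = (t \ v).card := by
    have h1 := card_inter_add_card_sdiff s v
    have h2 := card_inter_add_card_sdiff t v
    rw [inter_comm s v] at h1
    rw [inter_comm t v] at h2
    omega
  have hout : ((univ : Finset α) \ (v ∪ s)).card = ((univ : Finset α) \ (v ∪ t)).card := by
    have h1 := card_union_add_card_inter v s
    have h2 := card_union_add_card_inter v t
    have h3 := card_sdiff_of_subset (subset_univ (v ∪ s))
    have h4 := card_sdiff_of_subset (subset_univ (v ∪ t))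
    have h5 := card_le_card (subset_univ (v ∪ s))
    have h6 := card_le_card (subset_univ (v ∪ t))
    omega
  have E1 : ∀ s' : Finset α, {x : {y : α // y ∈ v} // x.1 ∈ s'} ≃ {z : α // z ∈ v ∩ s'} :=
    fun s' => (Equiv.subtypeSubtypeEquivSubtypeInter (· ∈ v) (· ∈ s')).trans
      (Equiv.subtypeEquivRight (fun x => by simp))
  have E2 : ∀ s' : Finset α, {x : {y : α // y ∈ v} // ¬ x.1 ∈ s'} ≃ {z : α // z ∈ v \ s'} :=
    fun s' => (Equiv.subtypeSubtypeEquivSubtypeInter (· ∈ v) (¬ · ∈ s')).trans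
      (Equiv.subtypeEquivRight (fun x => by simp))
  have E3 : ∀ s' : Finset α, {x : {y : α // ¬ y ∈ v} // x.1 ∈ s'} ≃ {z : α // z ∈ s' \ v} :=
    fun s' => (Equiv.subtypeSubtypeEquivSubtypeInter (¬ · ∈ v) (· ∈ s')).trans
      (Equiv.subtypeEquivRight (fun x => by simp [and_comm]))
  have E4 : ∀ s' : Finset α, {x : {y : α // ¬ y ∈ v} // ¬ x.1 ∈ s'} ≃
      {z : α // z ∈ (univ : Finset α) \ (v ∪ s')} :=
    fun s' => (Equiv.subtypeSubtypeEquivSubtypeInter (¬ · ∈ v) (¬ · ∈ s')).trans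
      (Equiv.subtypeEquivRight (fun x => by simp))
  have e1 : {x : {y : α // y ∈ v} // x.1 ∈ s} ≃ {x : {y : α // y ∈ v} // x.1 ∈ t} :=
    ((E1 s).trans (Finset.equivOfCardEq hint)).trans (E1 t).symm
  have e2 : {x : {y : α // y ∈ v} // ¬ x.1 ∈ s} ≃ {x : {y : α // y ∈ v} // ¬ x.1 ∈ t} :=
    ((E2 s).trans (Finset.equivOfCardEq hsd)).trans (E2 t).symm
  have e3 : {x : {y : α // ¬ y ∈ v} // x.1 ∈ s} ≃ {x : {y : α // ¬ y ∈ v} // x.1 ∈ t} :=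
    ((E3 s).trans (Finset.equivOfCardEq hsv)).trans (E3 t).symm
  have e4 : {x : {y : α // ¬ y ∈ v} // ¬ x.1 ∈ s} ≃ {x : {y : α // ¬ y ∈ v} // ¬ x.1 ∈ t} :=
    ((E4 s).trans (Finset.equivOfCardEq hout)).trans (E4 t).symm
  let E : {y : α // y ∈ v} ≃ {y : α // y ∈ v} := Equiv.subtypeCongr e1 e2
  let F : {y : α // ¬ y ∈ v} ≃ {y : α // ¬ y ∈ v} := Equiv.subtypeCongr e3 e4
  refine ⟨Equiv.subtypeCongr E F, ?_, ?_⟩ <;> intro x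
  · by_cases h : x ∈ v
    · rw [subtypeCongr_apply_pos E F x h]
      exact ⟨fun _ => (E ⟨x, h⟩).2, fun _ => h⟩
    · rw [subtypeCongr_apply_neg E F x h]
      exact ⟨fun hx => absurd hx h, fun hx => absurd hx (F ⟨x, h⟩).2⟩
  · by_cases h : x ∈ v
    · rw [subtypeCongr_apply_pos E F x h]
      by_cases hs : x ∈ s
      · have hE : E ⟨x, h⟩ = (e1 ⟨⟨x, h⟩, hs⟩).1 := subtypeCongr_apply_pos e1 e2 ⟨x, h⟩ hs
        rw [hE]
        exact ⟨fun _ => (e1 ⟨⟨x, h⟩, hs⟩).2, fun _ => hs⟩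
      · have hE : E ⟨x, h⟩ = (e2 ⟨⟨x, h⟩, hs⟩).1 := subtypeCongr_apply_neg e1 e2 ⟨x, h⟩ hs
        rw [hE]
        exact ⟨fun hx => absurd hx hs, fun hx => absurd hx (e2 ⟨⟨x, h⟩, hs⟩).2⟩
    · rw [subtypeCongr_apply_neg E F x h]
      by_cases hs : x ∈ s
      · have hF : F ⟨x, h⟩ = (e3 ⟨⟨x, h⟩, hs⟩).1 := subtypeCongr_apply_pos e3 e4 ⟨x, h⟩ hs
        rw [hF]
        exact ⟨fun _ => (e3 ⟨⟨x, h⟩, hs⟩).2, fun _ => hs⟩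
      · have hF : F ⟨x, h⟩ = (e4 ⟨⟨x, h⟩, hs⟩).1 := subtypeCongr_apply_neg e3 e4 ⟨x, h⟩ hs
        rw [hF]
        exact ⟨fun hx => absurd hx hs, fun hx => absurd hx (e4 ⟨⟨x, h⟩, hs⟩).2⟩

private lemma image_eq_of_iff {α : Type*} [DecidableEq α] (σ : Equiv.Perm α) {s t : Finset α}
    (h : ∀ x, x ∈ s ↔ σ x ∈ t) : s.image σ = t := by
  ext y
  simp only [mem_image]
  constructor
  · rintro ⟨x, hx, rfl⟩; exact (h x).1 hx
  · intro hy
    exact ⟨σ.symm y, (h _).2 (by simpa using hy), by simp⟩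

private lemma iff_symm_perm {α : Type*} (σ : Equiv.Perm α) {p q : α → Prop}
    (h : ∀ x, p x ↔ q (σ x)) : ∀ x, q x ↔ p (σ.symm x) := by
  intro x
  have := h (σ.symm x)
  rw [Equiv.apply_symm_apply] at this
  exact this.symm

private lemma inter_image_perm {α : Type*} [DecidableEq α] (σ : Equiv.Perm α) {v : Finset α}
    (hv : ∀ x, x ∈ v ↔ σ x ∈ v) (ℓ : Finset α) : v ∩ ℓ.image σ = (v ∩ ℓ).image σ := by
  ext y
  simp only [mem_inter, mem_image]
  constructor
  · rintro ⟨hyv, x, hx, rfl⟩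
    exact ⟨x, ⟨(hv x).2 hyv, hx⟩, rfl⟩
  · rintro ⟨x, ⟨hxv, hx⟩, rfl⟩
    exact ⟨(hv x).1 hxv, x, hx, rfl⟩

theorem concentric_worst_case (n j k : ℕ) (hj : 1 < j) (hjk : j ≤ k) (hkn : k < n)
    (P : Finset (Fin n) → ℝ) (hP0 : ∀ ℓ, 0 ≤ P ℓ)
    (hP1 : ∑ ℓ ∈ (univ : Finset (Fin n)).powersetCard j, P ℓ = 1)
    (v : Finset (Fin n)) (hv : v.card = j)
    -- `Pc` is the concentric distribution centered at `v` with the same ring weights as `P`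
    (Pc : Finset (Fin n) → ℝ)
    (hPc : ∀ ℓ : Finset (Fin n), ℓ.card = j →
      Pc ℓ = (∑ ℓ' ∈ ((univ : Finset (Fin n)).powersetCard j).filter
                (fun x => (v ∩ x).card = (v ∩ ℓ).card), P ℓ')
          / ((((univ : Finset (Fin n)).powersetCard j).filter
                (fun x => (v ∩ x).card = (v ∩ ℓ).card)).card : ℝ))
    (Co : Finset (Fin n)) (hCo : Co ∈ (univ : Finset (Fin n)).powersetCard k)
    (hmax : ∀ C ∈ (univ : Finset (Fin n)).powersetCard k,
      ∑ ℓ ∈ C.powersetCard j, Pc ℓ ≤ ∑ ℓ ∈ Co.powersetCard j, Pc ℓ) :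
    ∃ C ∈ (univ : Finset (Fin n)).powersetCard k,
      ∑ ℓ ∈ Co.powersetCard j, Pc ℓ ≤ ∑ ℓ ∈ C.powersetCard j, P ℓ := by
  classical
  set J : Finset (Finset (Fin n)) := (univ : Finset (Fin n)).powersetCard j with hJdef
  set O : Finset (Finset (Fin n)) := ((univ : Finset (Fin n)).powersetCard k).filter
      (fun C => (v ∩ C).card = (v ∩ Co).card) with hOdef
  have hCoO : Co ∈ O := mem_filter.mpr ⟨hCo, rfl⟩
  -- generic transport of memberships under a good permutation
  have himg : ∀ (σ : Equiv.Perm (Fin n)) (s : Finset (Fin n)) (m : ℕ),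
      s ∈ (univ : Finset (Fin n)).powersetCard m →
      s.image σ ∈ (univ : Finset (Fin n)).powersetCard m := by
    intro σ s m hs
    rw [mem_powersetCard] at hs ⊢
    exact ⟨subset_univ _, by rw [card_image_of_injective _ σ.injective, hs.2]⟩
  have hintcard : ∀ (σ : Equiv.Perm (Fin n)), (∀ x, x ∈ v ↔ σ x ∈ v) →
      ∀ s : Finset (Fin n), (v ∩ s.image σ).card = (v ∩ s).card := by
    intro σ hσ s
    rw [inter_image_perm σ hσ, card_image_of_injective _ σ.injective]
  -- Step 1 : the Pc-score is constant on O
  have step1 : ∀ C ∈ O, ∑ ℓ ∈ C.powersetCard j, Pc ℓ = ∑ ℓ ∈ Co.powersetCard j, Pc ℓ := by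
    intro C hC
    obtain ⟨hCK, hCint⟩ := mem_filter.mp hC
    obtain ⟨σ, hσv, hσC⟩ := exists_good_perm v C Co
      (by rw [(mem_powersetCard.mp hCK).2, (mem_powersetCard.mp hCo).2]) hCint
    refine Finset.sum_nbij' (fun ℓ => ℓ.image σ) (fun ℓ => ℓ.image σ.symm) ?_ ?_ ?_ ?_ ?_
    · intro ℓ hℓ
      rw [mem_powersetCard] at hℓ ⊢
      refine ⟨fun y hy => ?_, by rw [card_image_of_injective _ σ.injective, hℓ.2]⟩
      obtain ⟨x, hx, rfl⟩ := mem_image.mp hy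
      exact (hσC x).1 (hℓ.1 hx)
    · intro ℓ hℓ
      rw [mem_powersetCard] at hℓ ⊢
      refine ⟨fun y hy => ?_, by rw [card_image_of_injective _ (σ.symm).injective, hℓ.2]⟩
      obtain ⟨x, hx, rfl⟩ := mem_image.mp hy
      exact (iff_symm_perm σ hσC x).1 (hℓ.1 hx)
    · intro ℓ _; simp [Finset.image_image]
    · intro ℓ _; simp [Finset.image_image]
    · intro ℓ hℓ
      have hℓj : ℓ.card = j := (mem_powersetCard.mp hℓ).2
      have hℓ'j : (ℓ.image σ).card = j := by
        rw [card_image_of_injective _ σ.injective, hℓj]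
      rw [hPc ℓ hℓj, hPc (ℓ.image σ) hℓ'j, hintcard σ hσv ℓ]
  -- a description of `C.powersetCard j` as a filter of `J`
  have hpows : ∀ C : Finset (Fin n), C.powersetCard j = J.filter (fun ℓ => ℓ ⊆ C) := by
    intro C
    ext ℓ
    simp only [hJdef, mem_powersetCard, mem_filter]
    exact ⟨fun h => ⟨⟨subset_univ _, h.2⟩, h.1⟩, fun h => ⟨h.2, h.1.2⟩⟩
  -- swapping the order of summation
  have swap : ∀ f : Finset (Fin n) → ℝ, ∑ C ∈ O, ∑ ℓ ∈ C.powersetCard j, f ℓ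
      = ∑ ℓ ∈ J, f ℓ * ((O.filter (fun C => ℓ ⊆ C)).card : ℝ) := by
    intro f
    calc ∑ C ∈ O, ∑ ℓ ∈ C.powersetCard j, f ℓ
        = ∑ C ∈ O, ∑ ℓ ∈ J, if ℓ ⊆ C then f ℓ else 0 := by
          refine sum_congr rfl fun C _ => ?_
          rw [hpows C, sum_filter]
      _ = ∑ ℓ ∈ J, ∑ C ∈ O, if ℓ ⊆ C then f ℓ else 0 := sum_comm
      _ = ∑ ℓ ∈ J, f ℓ * ((O.filter (fun C => ℓ ⊆ C)).card : ℝ) := by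
          refine sum_congr rfl fun ℓ _ => ?_
          rw [← sum_filter, sum_const, nsmul_eq_mul, mul_comm]
  -- Lemma A : the count depends only on the ring
  have lemA : ∀ ℓ ∈ J, ∀ ℓ' ∈ J, (v ∩ ℓ).card = (v ∩ ℓ').card →
      (O.filter (fun C => ℓ ⊆ C)).card = (O.filter (fun C => ℓ' ⊆ C)).card := by
    intro ℓ hℓ ℓ' hℓ' hll
    obtain ⟨σ, hσv, hσl⟩ := exists_good_perm v ℓ ℓ'
      (by rw [(mem_powersetCard.mp hℓ).2, (mem_powersetCard.mp hℓ').2]) hll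
    have himgl : ℓ.image σ = ℓ' := image_eq_of_iff σ hσl
    have himgl' : ℓ'.image σ.symm = ℓ := image_eq_of_iff σ.symm (iff_symm_perm σ hσl)
    refine Finset.card_nbij' (fun C => C.image σ) (fun C => C.image σ.symm) ?_ ?_ ?_ ?_
    · intro C hC
      obtain ⟨hCO, hsub⟩ := mem_filter.mp hC
      obtain ⟨hCK, hCi⟩ := mem_filter.mp hCO
      refine mem_filter.mpr ⟨mem_filter.mpr ⟨himg σ C k hCK, by rw [hintcard σ hσv C]; exact hCi⟩, ?_⟩
      rw [← himgl]
      exact image_subset_image hsub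
    · intro C hC
      obtain ⟨hCO, hsub⟩ := mem_filter.mp hC
      obtain ⟨hCK, hCi⟩ := mem_filter.mp hCO
      refine mem_filter.mpr ⟨mem_filter.mpr ⟨himg σ.symm C k hCK,
        by rw [hintcard σ.symm (iff_symm_perm σ hσv) C]; exact hCi⟩, ?_⟩
      rw [← himgl']
      exact image_subset_image hsub
    · intro C _; simp [Finset.image_image]
    · intro C _; simp [Finset.image_image]
  -- the key identity : same weighted sums for P and Pc
  have main : ∑ ℓ ∈ J, P ℓ * ((O.filter (fun C => ℓ ⊆ C)).card : ℝ)
      = ∑ ℓ ∈ J, Pc ℓ * ((O.filter (fun C => ℓ ⊆ C)).card : ℝ) := by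
    have hmaps : ∀ ℓ ∈ J, (v ∩ ℓ).card ∈ range (j + 1) := by
      intro ℓ _
      rw [mem_range]
      have := card_le_card (inter_subset_left (s₁ := v) (s₂ := ℓ))
      omega
    rw [← sum_fiberwise_of_maps_to hmaps, ← sum_fiberwise_of_maps_to hmaps]
    refine sum_congr rfl fun m _ => ?_
    set R : Finset (Finset (Fin n)) := J.filter (fun ℓ => (v ∩ ℓ).card = m) with hRdef
    rcases R.eq_empty_or_nonempty with hR | ⟨ℓ0, hℓ0⟩
    · rw [hR]; simp
    · have hNconst : ∀ ℓ ∈ R, ((O.filter (fun C => ℓ ⊆ C)).card : ℝ)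
          = ((O.filter (fun C => ℓ0 ⊆ C)).card : ℝ) := by
        intro ℓ hℓ
        obtain ⟨hℓJ, hℓm⟩ := mem_filter.mp hℓ
        obtain ⟨hℓ0J, hℓ0m⟩ := mem_filter.mp hℓ0
        rw [lemA ℓ hℓJ ℓ0 hℓ0J (by rw [hℓm, hℓ0m])]
      have hPcconst : ∀ ℓ ∈ R, Pc ℓ = (∑ x ∈ R, P x) / (R.card : ℝ) := by
        intro ℓ hℓ
        obtain ⟨hℓJ, hℓm⟩ := mem_filter.mp hℓ
        rw [hPc ℓ (mem_powersetCard.mp hℓJ).2, hℓm]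
      have hRcard : (R.card : ℝ) ≠ 0 := by
        simp only [ne_eq, Nat.cast_eq_zero, card_eq_zero]
        exact ne_empty_of_mem hℓ0
      calc ∑ ℓ ∈ R, P ℓ * ((O.filter (fun C => ℓ ⊆ C)).card : ℝ)
          = ∑ ℓ ∈ R, P ℓ * ((O.filter (fun C => ℓ0 ⊆ C)).card : ℝ) := by
            refine sum_congr rfl fun ℓ hℓ => ?_
            rw [hNconst ℓ hℓ]
        _ = (∑ ℓ ∈ R, P ℓ) * ((O.filter (fun C => ℓ0 ⊆ C)).card : ℝ) := by
            rw [sum_mul]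
        _ = ∑ ℓ ∈ R, Pc ℓ * ((O.filter (fun C => ℓ ⊆ C)).card : ℝ) := by
            have e2 : ∑ ℓ ∈ R, Pc ℓ * ((O.filter (fun C => ℓ ⊆ C)).card : ℝ)
                = ∑ ℓ ∈ R, ((∑ x ∈ R, P x) / (R.card : ℝ))
                    * ((O.filter (fun C => ℓ0 ⊆ C)).card : ℝ) := by
              refine sum_congr rfl fun ℓ hℓ => ?_
              rw [hNconst ℓ hℓ, hPcconst ℓ hℓ]
            rw [e2, sum_const, nsmul_eq_mul]
            rw [← mul_assoc, mul_div_assoc', mul_comm (R.card : ℝ), mul_div_assoc, div_self hRcard, mul_one]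
  -- assembling
  have h1 : ∑ _C ∈ O, (∑ ℓ ∈ Co.powersetCard j, Pc ℓ) = ∑ C ∈ O, ∑ ℓ ∈ C.powersetCard j, P ℓ := by
    calc ∑ _C ∈ O, (∑ ℓ ∈ Co.powersetCard j, Pc ℓ)
        = ∑ C ∈ O, ∑ ℓ ∈ C.powersetCard j, Pc ℓ :=
          sum_congr rfl fun C hC => (step1 C hC).symm
      _ = ∑ ℓ ∈ J, Pc ℓ * ((O.filter (fun C => ℓ ⊆ C)).card : ℝ) := swap Pc
      _ = ∑ ℓ ∈ J, P ℓ * ((O.filter (fun C => ℓ ⊆ C)).card : ℝ) := main.symm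
      _ = ∑ C ∈ O, ∑ ℓ ∈ C.powersetCard j, P ℓ := (swap P).symm
  obtain ⟨C, hC, hle⟩ := Finset.exists_le_of_sum_le ⟨Co, hCoO⟩ (le_of_eq h1)
  exact ⟨C, (mem_filter.mp hC).1, hle⟩
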